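/- (Multidimensional discrete Gaussian upper bound) Let n ≥ 1, let M ∈ ℝ^{n×n} be symmetric positive definite, and let c ∈ ℝⁿ. Then ∑_{z∈ℤⁿ} exp(−π·(z−c)ᵀM(z−c)) ≤ (1 + λ_min(M)^{−1/2})ⁿ. -/

import Mathlib

open scoped BigOperators

open MeasureTheory Set

noncomputable section

/-- The smallest eigenvalue of a symmetric matrix, as the infimum of its
Rayleigh quotient over the Euclidean unit sphere. -/
def lambdaMin {n : ℕ} (A : Matrix (Fin n) (Fin n) ℝ) : ℝ :=
  ⨅ x : {x : Fin n → ℝ // ∑ i, x i ^ 2 = 1},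
    dotProduct (x : Fin n → ℝ) (A.mulVec (x : Fin n → ℝ))


lemma gauss_side (b : ℝ) (hb : 0 < b) (c : ℝ) (hc : |c| ≤ 1/2) :
    Summable (fun k : ℕ => Real.exp (-b * ((k : ℝ) + 1 - c)^2)) ∧
    ∑' k : ℕ, Real.exp (-b * ((k : ℝ) + 1 - c)^2)
      ≤ ∫ t in Set.Ioi (0:ℝ), Real.exp (-b * (t - c)^2) := by
  have hcont : Continuous fun t : ℝ => Real.exp (-b * (t - c)^2) := by continuity
  have hint : IntegrableOn (fun t : ℝ => Real.exp (-b * (t - c)^2)) (Set.Ioi 0) :=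
    ((integrable_exp_neg_mul_sq hb).comp_sub_right c).integrableOn
  have hnonneg : ∀ t : ℝ, 0 ≤ Real.exp (-b * (t - c)^2) := fun t => (Real.exp_pos _).le
  have hc1 : c ≤ 1/2 := (abs_le.mp hc).2
  have hc2 : -(1/2) ≤ c := (abs_le.mp hc).1
  have key : ∀ k : ℕ, Real.exp (-b * ((k:ℝ)+1-c)^2)
      ≤ ∫ t in (k:ℝ)..((k:ℝ)+1), Real.exp (-b * (t - c)^2) := by
    intro k
    have hk : (0:ℝ) ≤ (k:ℝ) := Nat.cast_nonneg k
    have h1 : Real.exp (-b * ((k:ℝ)+1-c)^2)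
        = ∫ _t in (k:ℝ)..((k:ℝ)+1), Real.exp (-b * ((k:ℝ)+1-c)^2) := by
      simp
    rw [h1]
    apply intervalIntegral.integral_mono_on (by linarith)
      (intervalIntegrable_const) (hcont.intervalIntegrable _ _)
    intro t ht
    rcases ht with ⟨ht1, ht2⟩
    have h2 : (t - c)^2 ≤ ((k:ℝ)+1-c)^2 := by
      apply sq_le_sq' <;> nlinarith
    exact Real.exp_le_exp.mpr (by nlinarith)
  have hpart : ∀ N : ℕ, ∑ k ∈ Finset.range N, Real.exp (-b*((k:ℝ)+1-c)^2)
      ≤ ∫ t in Set.Ioi (0:ℝ), Real.exp (-b*(t-c)^2) := by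
    intro N
    have h3 : ∑ k ∈ Finset.range N, Real.exp (-b*((k:ℝ)+1-c)^2)
        ≤ ∑ k ∈ Finset.range N, ∫ t in (k:ℝ)..((k:ℝ)+1), Real.exp (-b*(t-c)^2) :=
      Finset.sum_le_sum fun k _ => key k
    have h4 : ∑ k ∈ Finset.range N, ∫ t in (k:ℝ)..((k:ℝ)+1), Real.exp (-b*(t-c)^2)
        = ∫ t in (0:ℝ)..(N:ℝ), Real.exp (-b*(t-c)^2) := by
      have h := intervalIntegral.sum_integral_adjacent_intervals
        (a := fun k : ℕ => (k:ℝ)) (n := N)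
        (f := fun t => Real.exp (-b*(t-c)^2)) (μ := volume)
        (fun k _ => hcont.intervalIntegrable _ _)
      simp only [Nat.cast_zero] at h
      rw [← h]
      apply Finset.sum_congr rfl
      intro k _
      norm_num
    have h5 : ∫ t in (0:ℝ)..(N:ℝ), Real.exp (-b*(t-c)^2)
        = ∫ t in Set.Ioc (0:ℝ) (N:ℝ), Real.exp (-b*(t-c)^2) :=
      intervalIntegral.integral_of_le (Nat.cast_nonneg N)
    have h6 : ∫ t in Set.Ioc (0:ℝ) (N:ℝ), Real.exp (-b*(t-c)^2)
        ≤ ∫ t in Set.Ioi (0:ℝ), Real.exp (-b*(t-c)^2) :=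
      setIntegral_mono_set hint (Filter.Eventually.of_forall hnonneg)
        (HasSubset.Subset.eventuallyLE Set.Ioc_subset_Ioi_self)
    linarith
  exact ⟨summable_of_sum_range_le (fun k => hnonneg _) hpart,
    Real.tsum_le_of_sum_range_le (fun k => hnonneg _) hpart⟩

lemma gauss_one_dim (b : ℝ) (hb : 0 < b) (c : ℝ) :
    Summable (fun m : ℤ => Real.exp (-b * ((m:ℝ) - c)^2)) ∧
    ∑' m : ℤ, Real.exp (-b * ((m:ℝ) - c)^2) ≤ 1 + Real.sqrt (Real.pi / b) := by
  wlog hc : |c| ≤ 1/2 generalizing c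
  · set k := round c with hk
    have h := this (c - k) (by simpa using abs_sub_round c)
    have he : ∀ m : ℤ, Real.exp (-b * ((m:ℝ) - (c - (k:ℝ)))^2)
        = Real.exp (-b * (((Equiv.addRight k m : ℤ):ℝ) - c)^2) := by
      intro m
      simp only [Equiv.coe_addRight]
      push_cast
      ring_nf
    rw [funext he] at h
    exact ⟨(Equiv.addRight k).summable_iff.mp h.1,
      by rw [← Equiv.tsum_eq (Equiv.addRight k) (fun m : ℤ => Real.exp (-b * ((m:ℝ) - c)^2))]
         exact h.2⟩
  · have pos := gauss_side b hb c hc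
    have neg := gauss_side b hb (-c) (by rwa [abs_neg])
    -- identify negative side terms
    have hnegeq : (fun n : ℕ => Real.exp (-b * (((-(n+1) : ℤ):ℝ) - c)^2))
        = fun n : ℕ => Real.exp (-b * ((n:ℝ) + 1 - (-c))^2) := by
      funext n; push_cast; ring_nf
    -- summability over ℕ (with 0 term)
    have hsumnat : Summable (fun n : ℕ => Real.exp (-b * (((n:ℤ):ℝ) - c)^2)) := by
      rw [← summable_nat_add_iff 1]
      have : (fun n : ℕ => Real.exp (-b * ((((n+1 : ℕ):ℤ):ℝ) - c)^2))
          = fun n : ℕ => Real.exp (-b * ((n:ℝ) + 1 - c)^2) := by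
        funext n; push_cast; ring_nf
      rw [this]; exact pos.1
    have hsumneg : Summable (fun n : ℕ => Real.exp (-b * (((-(n+1) : ℤ):ℝ) - c)^2)) := by
      rw [hnegeq]; exact neg.1
    have hsummable : Summable (fun m : ℤ => Real.exp (-b * ((m:ℝ) - c)^2)) :=
      Summable.of_nat_of_neg_add_one hsumnat hsumneg
    refine ⟨hsummable, ?_⟩
    have hsplit := tsum_of_nat_of_neg_add_one (f := fun m : ℤ => Real.exp (-b * ((m:ℝ) - c)^2)) hsumnat hsumneg
    rw [hsplit]
    -- the nat part: first term plus shifted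
    have hzero := hsumnat.tsum_eq_zero_add
    have hshift : (fun n : ℕ => Real.exp (-b * ((((n+1 : ℕ):ℤ):ℝ) - c)^2))
        = fun n : ℕ => Real.exp (-b * ((n:ℝ) + 1 - c)^2) := by
      funext n; push_cast; ring_nf
    rw [hshift] at hzero
    rw [hzero, hnegeq]
    have h0 : Real.exp (-b * ((((0:ℕ):ℤ):ℝ) - c)^2) ≤ 1 := by
      rw [← Real.exp_zero]
      apply Real.exp_le_exp.mpr
      nlinarith [sq_nonneg ((0:ℝ) - c)]
    -- integrals
    have hIoi := pos.2
    have hIoineg := neg.2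
    have hIio : ∫ t in Set.Ioi (0:ℝ), Real.exp (-b * (t - (-c))^2)
        = ∫ t in Set.Iic (0:ℝ), Real.exp (-b * (t - c)^2) := by
      have h := integral_comp_neg_Ioi (c := (0:ℝ)) (f := fun t => Real.exp (-b * (t - c)^2))
      rw [neg_zero] at h
      rw [← h]
      apply setIntegral_congr_fun measurableSet_Ioi
      intro t _
      ring_nf
    have hintegrable : Integrable (fun t : ℝ => Real.exp (-b * (t - c)^2)) :=
      (integrable_exp_neg_mul_sq hb).comp_sub_right c
    have htotal : (∫ t in Set.Iic (0:ℝ), Real.exp (-b * (t - c)^2))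
        + ∫ t in Set.Ioi (0:ℝ), Real.exp (-b * (t - c)^2)
        = ∫ t : ℝ, Real.exp (-b * (t - c)^2) :=
      intervalIntegral.integral_Iic_add_Ioi hintegrable.integrableOn hintegrable.integrableOn
    have hgauss : ∫ t : ℝ, Real.exp (-b * (t - c)^2) = Real.sqrt (Real.pi / b) := by
      rw [integral_sub_right_eq_self (fun t => Real.exp (-b * t^2)) c]
      exact integral_gaussian b
    rw [hIio] at hIoineg
    have hcomb := add_le_add (add_le_add h0 hIoi) hIoineg
    refine hcomb.trans ?_
    rw [add_assoc, add_comm (∫ t in Set.Ioi (0:ℝ), Real.exp (-b * (t - c)^2))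
      (∫ t in Set.Iic (0:ℝ), Real.exp (-b * (t - c)^2)), htotal, hgauss]

lemma rayleigh_pos {n : ℕ} (M : Matrix (Fin n) (Fin n) ℝ) (hM : M.PosDef)
    (x : Fin n → ℝ) (hx : x ≠ 0) : 0 < dotProduct x (M.mulVec x) := by
  have := hM.dotProduct_mulVec_pos hx
  simpa using this

lemma unit_ne_zero {n : ℕ} (x : Fin n → ℝ) (hx : ∑ i, x i ^ 2 = 1) : x ≠ 0 := by
  intro h
  rw [h] at hx
  simp at hx

lemma lambdaMin_bddBelow {n : ℕ} (M : Matrix (Fin n) (Fin n) ℝ) (hM : M.PosDef) :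
    BddBelow (Set.range fun x : {x : Fin n → ℝ // ∑ i, x i ^ 2 = 1} =>
      dotProduct (x : Fin n → ℝ) (M.mulVec (x : Fin n → ℝ))) := by
  refine ⟨0, ?_⟩
  rintro _ ⟨⟨x, hx⟩, rfl⟩
  exact (rayleigh_pos M hM x (unit_ne_zero x hx)).le

lemma lambdaMin_mul_le {n : ℕ} (M : Matrix (Fin n) (Fin n) ℝ) (hM : M.PosDef)
    (x : Fin n → ℝ) :
    lambdaMin M * (∑ i, x i ^ 2) ≤ dotProduct x (M.mulVec x) := by
  by_cases hx : x = 0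
  · subst hx
    simp
  · have hs : 0 < ∑ i, x i ^ 2 := by
      obtain ⟨i, hi⟩ := Function.ne_iff.mp hx
      exact Finset.sum_pos' (fun j _ => sq_nonneg _)
        ⟨i, Finset.mem_univ i, pow_two_pos_of_ne_zero hi⟩
    set a : ℝ := (Real.sqrt (∑ i, x i ^ 2))⁻¹ with ha
    have hsqrt : 0 < Real.sqrt (∑ i, x i ^ 2) := Real.sqrt_pos.mpr hs
    have ha2 : a ^ 2 = (∑ i, x i ^ 2)⁻¹ := by
      rw [ha, ← Real.sqrt_inv, Real.sq_sqrt (by positivity)]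
    have hu : ∑ i, (a • x) i ^ 2 = 1 := by
      have : ∑ i, (a • x) i ^ 2 = a ^ 2 * ∑ i, x i ^ 2 := by
        rw [Finset.mul_sum]
        exact Finset.sum_congr rfl fun i _ => by simp [Pi.smul_apply, mul_pow]
      rw [this, ha2, inv_mul_cancel₀ hs.ne']
    have hle : lambdaMin M ≤ dotProduct (a • x) (M.mulVec (a • x)) :=
      ciInf_le (lambdaMin_bddBelow M hM) ⟨a • x, hu⟩
    have heq : dotProduct (a • x) (M.mulVec (a • x))
        = a ^ 2 * dotProduct x (M.mulVec x) := by
      rw [Matrix.mulVec_smul, smul_dotProduct, dotProduct_smul]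
      simp [sq, mul_assoc, smul_eq_mul]
      try ring
    rw [heq, ha2] at hle
    have h := mul_le_mul_of_nonneg_right hle hs.le
    rwa [inv_mul_eq_div, div_mul_cancel₀ _ hs.ne'] at h

lemma lambdaMin_pos (n : ℕ) (hn : 1 ≤ n) (M : Matrix (Fin n) (Fin n) ℝ)
    (hM : M.PosDef) : 0 < lambdaMin M := by
  set S : Set (Fin n → ℝ) := {x | ∑ i, x i ^ 2 = 1} with hS
  have hcont : Continuous fun x : Fin n → ℝ => dotProduct x (M.mulVec x) :=
    continuous_id.dotProduct (continuous_const.matrix_mulVec continuous_id)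
  have hclosed : IsClosed S :=
    isClosed_eq (by continuity) continuous_const
  have hbdd : Bornology.IsBounded S := by
    apply Bornology.IsBounded.subset (Metric.isBounded_closedBall (x := (0 : Fin n → ℝ)) (r := 1))
    intro x hx
    rw [Metric.mem_closedBall, dist_zero_right]
    rw [pi_norm_le_iff_of_nonneg zero_le_one]
    intro i
    rw [Real.norm_eq_abs, ← Real.sqrt_one]
    rw [show |x i| = Real.sqrt (x i ^ 2) by rw [Real.sqrt_sq_eq_abs]]
    apply Real.sqrt_le_sqrt
    rw [← hx]
    exact Finset.single_le_sum (fun j _ => sq_nonneg (x j)) (Finset.mem_univ i)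
  have hcompact : IsCompact S := Metric.isCompact_of_isClosed_isBounded hclosed hbdd
  have hne : S.Nonempty := by
    refine ⟨Pi.single ⟨0, hn⟩ 1, ?_⟩
    simp [hS, Pi.single_apply]
  obtain ⟨x₀, hx₀S, hmin⟩ := hcompact.exists_isMinOn hne hcont.continuousOn
  have hpos : 0 < dotProduct x₀ (M.mulVec x₀) :=
    rayleigh_pos M hM x₀ (unit_ne_zero x₀ hx₀S)
  have hnei : Nonempty {x : Fin n → ℝ // ∑ i, x i ^ 2 = 1} := ⟨⟨x₀, hx₀S⟩⟩
  have : dotProduct x₀ (M.mulVec x₀) ≤ lambdaMin M := by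
    apply le_ciInf
    rintro ⟨x, hx⟩
    exact hmin hx
  linarith

lemma tsum_pi_prod : ∀ (n : ℕ) (g : Fin n → ℤ → ENNReal),
    ∑' z : Fin n → ℤ, ∏ i, g i (z i) = ∏ i, ∑' m : ℤ, g i m := by
  intro n
  induction n with
  | zero =>
    intro g
    rw [show (fun z : Fin 0 → ℤ => ∏ i, g i (z i)) = fun _ => 1 from
      funext fun z => by simp]
    rw [tsum_eq_single (fun i => i.elim0)
      (fun b hb => absurd (Subsingleton.elim b _) hb)]
    simp
  | succ n ih =>
    intro g
    rw [← (Fin.consEquiv (fun _ : Fin (n+1) => ℤ)).tsum_eq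
      (fun z : Fin (n+1) → ℤ => ∏ i, g i (z i))]
    have hterm : ∀ p : ℤ × (Fin n → ℤ),
        (∏ i, g i ((Fin.consEquiv (fun _ : Fin (n+1) => ℤ)) p i))
        = g 0 p.1 * ∏ i : Fin n, g i.succ (p.2 i) := by
      rintro ⟨a, w⟩
      rw [Fin.prod_univ_succ]
      simp [Fin.consEquiv]
    calc ∑' p : ℤ × (Fin n → ℤ),
          ∏ i, g i ((Fin.consEquiv (fun _ : Fin (n+1) => ℤ)) p i)
        = ∑' p : ℤ × (Fin n → ℤ), g 0 p.1 * ∏ i : Fin n, g i.succ (p.2 i) := by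
          exact tsum_congr hterm
      _ = ∑' a : ℤ, ∑' w : Fin n → ℤ, g 0 a * ∏ i : Fin n, g i.succ (w i) :=
          ENNReal.tsum_prod (f := fun (a : ℤ) (w : Fin n → ℤ) => g 0 a * ∏ i : Fin n, g i.succ (w i))
      _ = ∑' a : ℤ, g 0 a * ∑' w : Fin n → ℤ, ∏ i : Fin n, g i.succ (w i) := by
          exact tsum_congr fun a => ENNReal.tsum_mul_left
      _ = (∑' a : ℤ, g 0 a) * ∑' w : Fin n → ℤ, ∏ i : Fin n, g i.succ (w i) :=
          ENNReal.tsum_mul_right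
      _ = ∏ i : Fin (n+1), ∑' m : ℤ, g i m := by
          rw [ih (fun i => g i.succ), Fin.prod_univ_succ]

/-- **Multidimensional discrete Gaussian upper bound** (Fact 4.3):
for any symmetric positive definite `M` and any center `c ∈ ℝⁿ`,
`∑_{z∈ℤⁿ} exp(-π(z-c)ᵀM(z-c)) ≤ (1 + λ_min(M)^{-1/2})ⁿ`. -/
theorem multidim_gaussian_upper
    (n : ℕ) (hn : 1 ≤ n) (M : Matrix (Fin n) (Fin n) ℝ) (hM : M.PosDef)
    (c : Fin n → ℝ) :
    (∑' z : Fin n → ℤ,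
        Real.exp (-Real.pi *
          dotProduct (fun i => (z i : ℝ) - c i)
            (M.mulVec (fun i => (z i : ℝ) - c i))))
      ≤ (1 + lambdaMin M ^ (-(1:ℝ)/2)) ^ n := by
  set lam : ℝ := lambdaMin M with hlam
  have hlampos : 0 < lam := lambdaMin_pos n hn M hM
  set b : ℝ := Real.pi * lam with hbdef
  have hb : 0 < b := mul_pos Real.pi_pos hlampos
  set R : ℝ := 1 + lam ^ (-(1:ℝ)/2) with hR
  have hrpow : lam ^ (-(1:ℝ)/2) = (Real.sqrt lam)⁻¹ := by
    rw [Real.sqrt_eq_rpow, ← Real.rpow_neg hlampos.le]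
    norm_num
  have hRpos : 0 < R := by
    rw [hR, hrpow]
    have := Real.sqrt_pos.mpr hlampos
    positivity
  have hsqeq : 1 + Real.sqrt (Real.pi / b) = R := by
    rw [hR, hrpow, hbdef]
    rw [show Real.pi / (Real.pi * lam) = lam⁻¹ by
      field_simp]
    rw [Real.sqrt_inv]
  -- quadratic form bound
  have hquad : ∀ x : Fin n → ℝ,
      Real.exp (-Real.pi * dotProduct x (M.mulVec x))
        ≤ ∏ i, Real.exp (-b * (x i)^2) := by
    intro x
    rw [← Real.exp_sum]
    apply Real.exp_le_exp.mpr
    have h1 := lambdaMin_mul_le M hM x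
    have h2 : ∑ i, -b * (x i)^2 = -Real.pi * (lam * ∑ i, x i ^ 2) := by
      rw [← Finset.mul_sum]
      rw [hbdef]; ring
    rw [h2]
    have hpi := Real.pi_pos
    nlinarith
  set F : (Fin n → ℤ) → ℝ := fun z =>
    Real.exp (-Real.pi *
      dotProduct (fun i => (z i : ℝ) - c i)
        (M.mulVec (fun i => (z i : ℝ) - c i))) with hF
  set G : Fin n → ℤ → ℝ := fun i m => Real.exp (-b * ((m:ℝ) - c i)^2) with hG
  have hFG : ∀ z : Fin n → ℤ, F z ≤ ∏ i, G i (z i) :=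
    fun z => hquad (fun i => (z i : ℝ) - c i)
  have hGsum : ∀ i, Summable (G i) := fun i => (gauss_one_dim b hb (c i)).1
  have hGbd : ∀ i, ∑' m : ℤ, G i m ≤ R :=
    fun i => hsqeq ▸ (gauss_one_dim b hb (c i)).2
  have chain : ∑' z : Fin n → ℤ, ENNReal.ofReal (F z) ≤ ENNReal.ofReal (R ^ n) := by
    calc ∑' z : Fin n → ℤ, ENNReal.ofReal (F z)
        ≤ ∑' z : Fin n → ℤ, ∏ i, ENNReal.ofReal (G i (z i)) := by
          apply ENNReal.tsum_le_tsum
          intro z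
          rw [← ENNReal.ofReal_prod_of_nonneg (fun i _ => (Real.exp_pos _).le)]
          exact ENNReal.ofReal_le_ofReal (hFG z)
      _ = ∏ i, ∑' m : ℤ, ENNReal.ofReal (G i m) :=
          tsum_pi_prod n (fun i m => ENNReal.ofReal (G i m))
      _ ≤ ∏ _i : Fin n, ENNReal.ofReal R := by
          apply Finset.prod_le_prod'
          intro i _
          rw [← ENNReal.ofReal_tsum_of_nonneg (fun m => (Real.exp_pos _).le) (hGsum i)]
          exact ENNReal.ofReal_le_ofReal (hGbd i)
      _ = ENNReal.ofReal (R ^ n) := by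
          rw [Finset.prod_const, ENNReal.ofReal_pow hRpos.le, Finset.card_univ,
            Fintype.card_fin]
  have hne : ∑' z : Fin n → ℤ, ENNReal.ofReal (F z) ≠ ⊤ :=
    (lt_of_le_of_lt chain ENNReal.ofReal_lt_top).ne
  have hFsummable : Summable F := by
    have h := ENNReal.summable_toReal hne
    have heq : (fun z : Fin n → ℤ => (ENNReal.ofReal (F z)).toReal) = F :=
      funext fun z => ENNReal.toReal_ofReal (Real.exp_pos _).le
    rwa [heq] at h
  have hfinal : ENNReal.ofReal (∑' z, F z) ≤ ENNReal.ofReal (R ^ n) := by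
    rw [ENNReal.ofReal_tsum_of_nonneg (fun z => (Real.exp_pos _).le) hFsummable]
    exact chain
  exact (ENNReal.ofReal_le_ofReal_iff (by positivity)).mp hfinal
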